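/- Let X be a topological space with the disjoint topographies property. Then X × I has the disjoint disks property: any two continuous maps F₁, F₂ : D² → X × I can be approximated arbitrarily closely by maps with disjoint images. -/

import Mathlib

open Set Metric unitInterval

/-- The closed 2-disk. -/
abbrev Disk2 : Set (EuclideanSpace ℝ (Fin 2)) := Metric.closedBall 0 1

/-- if `X` has the disjoint topographies property, then `X × I` has the
disjoint disks (approximation) property. -/
theorem stmt_2 {X : Type*} [MetricSpace X]
    (hDTP : ∀ (f₁ f₂ : Disk2 → X) (τ₁ τ₂ : Disk2 → I),
      Continuous f₁ → Continuous f₂ → Continuous τ₁ → Continuous τ₂ →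
      ∀ ε > (0 : ℝ),
      ∃ (f₁' f₂' : Disk2 → X) (τ₁' τ₂' : Disk2 → I),
        Continuous f₁' ∧ Continuous f₂' ∧ Continuous τ₁' ∧ Continuous τ₂' ∧
        (∀ z, dist (f₁ z) (f₁' z) < ε) ∧ (∀ z, dist (f₂ z) (f₂' z) < ε) ∧
        (∀ z, dist (τ₁ z) (τ₁' z) < ε) ∧ (∀ z, dist (τ₂ z) (τ₂' z) < ε) ∧
        ∀ t : I, f₁' '' (τ₁' ⁻¹' {t}) ∩ f₂' '' (τ₂' ⁻¹' {t}) = ∅) :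
    ∀ F₁ F₂ : Disk2 → X × I, Continuous F₁ → Continuous F₂ → ∀ ε > (0 : ℝ),
      ∃ F₁' F₂' : Disk2 → X × I, Continuous F₁' ∧ Continuous F₂' ∧
        Disjoint (range F₁') (range F₂') ∧
        (∀ z, dist (F₁ z) (F₁' z) < ε) ∧ (∀ z, dist (F₂ z) (F₂' z) < ε) := by
  intro F₁ F₂ hF₁ hF₂ ε hε
  obtain ⟨f₁', f₂', τ₁', τ₂', hc₁, hc₂, hct₁, hct₂, hd₁, hd₂, hdt₁, hdt₂, hdisj⟩ :=
    hDTP (fun z => (F₁ z).1) (fun z => (F₂ z).1) (fun z => (F₁ z).2) (fun z => (F₂ z).2)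
      (hF₁.fst) (hF₂.fst) (hF₁.snd) (hF₂.snd) ε hε
  refine ⟨fun z => (f₁' z, τ₁' z), fun z => (f₂' z, τ₂' z), hc₁.prodMk hct₁,
    hc₂.prodMk hct₂, ?_, fun z => ?_, fun z => ?_⟩
  · rw [Set.disjoint_left]
    rintro ⟨x, t⟩ ⟨z₁, hz₁⟩ ⟨z₂, hz₂⟩
    have h := hdisj t
    apply (Set.eq_empty_iff_forall_notMem.mp h) x
    obtain ⟨hx₁, ht₁⟩ := Prod.mk.injEq .. ▸ hz₁
    obtain ⟨hx₂, ht₂⟩ := Prod.mk.injEq .. ▸ hz₂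
    exact ⟨⟨z₁, ht₁, hx₁⟩, ⟨z₂, ht₂, hx₂⟩⟩
  · exact max_lt (hd₁ z) (hdt₁ z)
  · exact max_lt (hd₂ z) (hdt₂ z)
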